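/- arXiv:1607.00215 — 2 statements merged into one kernel-verified Lean document; each statement's English description precedes it below -/
import Mathlib

section
/- Let a, b > 0 and let X and Y be independent random variables on a probability space with X Gamma-distributed with shape a and rate 1, and Y Gamma-distributed with shape b and rate 1. Then E[X | σ(X+Y)] = (a/(a+b)) · (X+Y) almost surely. -/
open MeasureTheory ProbabilityTheory Real Set
open scoped ENNReal NNReal

noncomputable def rBeta (u v : ℝ) : ℝ := ∫ t in (0:ℝ)..1, t ^ (u-1) * (1-t) ^ (v-1)

lemma rBeta_eq_complex (u v : ℝ) (hu : 0 < u) (hv : 0 < v) :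
    (Complex.betaIntegral u v) = (rBeta u v : ℂ) := by
  rw [Complex.betaIntegral, rBeta, ← intervalIntegral.integral_ofReal]
  refine intervalIntegral.integral_congr fun x hx => ?_
  rw [uIcc_of_le zero_le_one] at hx
  rw [Complex.ofReal_mul, Complex.ofReal_cpow hx.1, Complex.ofReal_cpow (by linarith [hx.2] : (0:ℝ) ≤ 1 - x)]
  push_cast
  ring

lemma rBeta_recurrence {u v : ℝ} (hu : 0 < u) (hv : 0 < v) :
    u * rBeta u (v + 1) = v * rBeta (u + 1) v := by
  have := Complex.betaIntegral_recurrence (u := u) (v := v) (by simpa) (by simpa)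
  have h1 : ((u:ℂ)) * rBeta u (v+1) = ((v:ℂ)) * rBeta (u+1) v := by
    rw [← rBeta_eq_complex u (v+1) hu (by linarith), ← rBeta_eq_complex (u+1) v (by linarith) hv]
    push_cast
    convert this using 3 <;> push_cast <;> ring
  exact_mod_cast h1

lemma integrableOn_beta {u v : ℝ} (hu : 0 < u) (hv : 0 < v) :
    IntegrableOn (fun t : ℝ => t ^ (u-1) * (1-t) ^ (v-1)) (Ioc 0 1) := by
  have h := (intervalIntegrable_iff_integrableOn_Ioc_of_le zero_le_one).mp
    (Complex.betaIntegral_convergent (u := u) (v := v) (by simpa) (by simpa))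
  have h2 := h.re
  refine h2.congr ((ae_restrict_iff' measurableSet_Ioc).mpr (ae_of_all _ fun x hx => ?_))
  have h3 : ((x:ℂ) ^ ((u:ℂ)-1) * (1-(x:ℂ)) ^ ((v:ℂ)-1)) = ((x ^ (u-1) * (1-x) ^ (v-1) : ℝ) : ℂ) := by
    rw [Complex.ofReal_mul, Complex.ofReal_cpow hx.1.le,
      Complex.ofReal_cpow (by linarith [hx.2] : (0:ℝ) ≤ 1 - x)]
    push_cast; ring
  simp [h3]

lemma lintegral_beta {u v : ℝ} (hu : 0 < u) (hv : 0 < v) :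
    ∫⁻ t in Ioo (0:ℝ) 1, ENNReal.ofReal (t ^ (u-1) * (1-t) ^ (v-1))
      = ENNReal.ofReal (rBeta u v) := by
  rw [setLIntegral_congr Ioo_ae_eq_Ioc,
    ← ofReal_integral_eq_lintegral_ofReal (integrableOn_beta hu hv)
      ((ae_restrict_iff' measurableSet_Ioc).mpr (ae_of_all _ fun x hx => by
        have h1 : (0:ℝ) ≤ x := hx.1.le
        have h2 : (0:ℝ) ≤ 1 - x := by linarith [hx.2]
        positivity)),
    rBeta, intervalIntegral.integral_of_le zero_le_one]

lemma measurable_gammaPDF (α r : ℝ) : Measurable (gammaPDF α r) :=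
  ENNReal.measurable_ofReal.comp (measurable_gammaPDFReal α r)

-- the inner convolution kernel: ∫⁻ x, γα(x) γβ(s-x) dx
lemma gamma_conv_kernel_nonpos {α β : ℝ} {s : ℝ} (hs : s ≤ 0) :
    ∫⁻ x, gammaPDF α 1 x * gammaPDF β 1 (s - x) = 0 := by
  rw [← lintegral_zero (μ := (volume : Measure ℝ))]
  refine lintegral_congr_ae ?_
  filter_upwards [compl_mem_ae_iff.mpr (volume_singleton (a := (0:ℝ)))] with x hx
  rcases lt_or_gt_of_ne (show x ≠ 0 from fun h => hx (by simp [h])) with h | h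
  · rw [gammaPDF_of_neg h, zero_mul]
  · rw [gammaPDF_of_neg (by linarith : s - x < 0), mul_zero]

lemma rBeta_nonneg {u v : ℝ} : 0 ≤ rBeta u v := by
  refine intervalIntegral.integral_nonneg zero_le_one fun x hx => ?_
  have h1 : (0:ℝ) ≤ x := hx.1
  have h2 : (0:ℝ) ≤ 1 - x := by linarith [hx.2]
  positivity

lemma measurable_aux (α β s : ℝ) :
    Measurable fun x : ℝ => ENNReal.ofReal (x ^ (α-1) * (s-x) ^ (β-1)) :=
  ENNReal.measurable_ofReal.comp
    ((measurable_id'.pow_const _).mul ((measurable_const.sub measurable_id').pow_const _))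

lemma gamma_conv_kernel_pos {α β : ℝ} (hα : 0 < α) (hβ : 0 < β) {s : ℝ} (hs : 0 < s) :
    ∫⁻ x, gammaPDF α 1 x * gammaPDF β 1 (s - x) =
      ENNReal.ofReal (rBeta α β / (Real.Gamma α * Real.Gamma β)) *
        ENNReal.ofReal (s ^ (α+β-1) * Real.exp (-s)) := by
  have hGα := Real.Gamma_pos_of_pos hα
  have hGβ := Real.Gamma_pos_of_pos hβ
  set C : ℝ := Real.exp (-s) / (Real.Gamma α * Real.Gamma β) with hC
  have hCpos : 0 < C := by positivity
  set g : ℝ → ℝ≥0∞ := fun x => ENNReal.ofReal (x ^ (α-1) * (s-x) ^ (β-1)) with hg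
  have hgmeas : Measurable g := measurable_aux α β s
  -- step 1 : rewrite integrand as indicator
  have h1 : ∀ᵐ x : ℝ, gammaPDF α 1 x * gammaPDF β 1 (s - x)
      = (Ioo 0 s).indicator (fun x => ENNReal.ofReal C * g x) x := by
    filter_upwards [compl_mem_ae_iff.mpr (measure_union_null (volume_singleton (a := (0:ℝ)))
      (volume_singleton (a := s)))] with x hx
    simp only [Set.mem_compl_iff, Set.mem_union, Set.mem_singleton_iff, not_or] at hx
    rcases lt_trichotomy x 0 with h | h | h
    · rw [gammaPDF_of_neg h, zero_mul, indicator_of_notMem (fun hm => absurd hm.1 (by linarith))]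
    · exact absurd h hx.1
    rcases lt_trichotomy x s with h' | h' | h'
    · rw [indicator_of_mem (Set.mem_Ioo.mpr ⟨h, h'⟩), gammaPDF_of_nonneg h.le,
        gammaPDF_of_nonneg (by linarith : (0:ℝ) ≤ s - x), ← ENNReal.ofReal_mul (by positivity),
        ← ENNReal.ofReal_mul hCpos.le]
      congr 1
      have hexp : Real.exp (-(1*x)) * Real.exp (-(1*(s-x))) = Real.exp (-s) := by
        rw [← Real.exp_add]; ring_nf
      rw [hC]
      have h1x : ((1:ℝ) ^ α) = 1 := Real.one_rpow α
      have h1y : ((1:ℝ) ^ β) = 1 := Real.one_rpow β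
      rw [h1x, h1y, ← hexp]; ring
    · exact absurd h' hx.2
    · rw [gammaPDF_of_neg (by linarith : s - x < 0), mul_zero,
        indicator_of_notMem (fun hm => absurd hm.2 (by linarith))]
  rw [lintegral_congr_ae h1, lintegral_indicator measurableSet_Ioo _,
    lintegral_const_mul _ hgmeas]
  -- step 2 : scaling x = s t
  have hpre : (fun t : ℝ => s * t) ⁻¹' (Ioo 0 s) = Ioo 0 1 := by
    ext t
    simp only [Set.mem_preimage, Set.mem_Ioo]
    constructor
    · rintro ⟨h1', h2'⟩
      constructor
      · by_contra hcon; push_neg at hcon; nlinarith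
      · by_contra hcon; push_neg at hcon; nlinarith
    · rintro ⟨h1', h2'⟩
      exact ⟨by positivity, by nlinarith⟩
  have h2 : ∫⁻ t in Ioo (0:ℝ) 1, g (s*t) = ENNReal.ofReal |s⁻¹| * ∫⁻ x in Ioo 0 s, g x := by
    calc ∫⁻ t in Ioo (0:ℝ) 1, g (s*t)
        = ∫⁻ x, g x ∂(Measure.map (fun t => s * t) (volume.restrict (Ioo 0 1))) :=
          (lintegral_map hgmeas (measurable_const_mul s)).symm
      _ = ∫⁻ x, g x ∂((volume.map (fun t : ℝ => s * t)).restrict (Ioo 0 s)) := by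
          rw [Measure.restrict_map (measurable_const_mul s) measurableSet_Ioo, hpre]
      _ = ENNReal.ofReal |s⁻¹| * ∫⁻ x in Ioo 0 s, g x := by
          rw [Real.map_volume_mul_left hs.ne', Measure.restrict_smul, lintegral_smul_measure, smul_eq_mul]
  have hss : ENNReal.ofReal s * ENNReal.ofReal |s⁻¹| = 1 := by
    rw [← ENNReal.ofReal_mul hs.le, abs_of_pos (by positivity), mul_inv_cancel₀ hs.ne',
      ENNReal.ofReal_one]
  have h3 : ∫⁻ x in Ioo 0 s, g x = ENNReal.ofReal s * ∫⁻ t in Ioo (0:ℝ) 1, g (s*t) := by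
    rw [h2, ← mul_assoc, hss, one_mul]
  -- step 3 : compute the scaled integrand
  have h4 : ∫⁻ t in Ioo (0:ℝ) 1, g (s*t)
      = ENNReal.ofReal (s ^ (α+β-2)) * ENNReal.ofReal (rBeta α β) := by
    have := measurable_aux α β 1
    rw [← lintegral_beta hα hβ, ← lintegral_const_mul _ this]
    refine setLIntegral_congr_fun_ae measurableSet_Ioo (ae_of_all _ fun t ht => ?_)
    obtain ⟨ht0, ht1⟩ := ht
    show ENNReal.ofReal ((s*t) ^ (α-1) * (s - s*t) ^ (β-1)) = _
    have e1 : s * t - s * t = 0 := by ring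
    have hst : s - s * t = s * (1 - t) := by ring
    rw [hst, Real.mul_rpow hs.le ht0.le, Real.mul_rpow hs.le (by linarith : (0:ℝ) ≤ 1 - t),
      ← ENNReal.ofReal_mul (by positivity)]
    congr 1
    rw [show α + β - 2 = (α - 1) + (β - 1) by ring, Real.rpow_add hs]
    ring
  rw [h3, h4]
  have hrpow : s * s ^ (α+β-2) = s ^ (α+β-1) := by
    rw [show α+β-1 = 1+(α+β-2) by ring, Real.rpow_add hs, Real.rpow_one]
  rw [← ENNReal.ofReal_mul (by positivity : (0:ℝ) ≤ s ^ (α+β-2)),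
    ← ENNReal.ofReal_mul hs.le, ← ENNReal.ofReal_mul hCpos.le,
    ← ENNReal.ofReal_mul (div_nonneg rBeta_nonneg (by positivity))]
  congr 1
  rw [hC, ← hrpow]
  ring

lemma gamma_conv {α β : ℝ} (hα : 0 < α) (hβ : 0 < β) (f : ℝ → ℝ≥0∞) (hf : Measurable f) :
    ∫⁻ x, ∫⁻ y, gammaPDF α 1 x * gammaPDF β 1 y * f (x+y) ∂volume ∂volume
      = ENNReal.ofReal (rBeta α β / (Real.Gamma α * Real.Gamma β)) *
        ∫⁻ s in Ioi (0:ℝ), ENNReal.ofReal (s ^ (α+β-1) * Real.exp (-s)) * f s := by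
  have hγα := measurable_gammaPDF α 1
  have hγβ := measurable_gammaPDF β 1
  have step2 : ∀ x : ℝ, ∫⁻ y, gammaPDF β 1 y * f (x+y)
      = ∫⁻ s, gammaPDF β 1 (s-x) * f s := by
    intro x
    have h := lintegral_add_right_eq_self (μ := (volume : Measure ℝ))
      (fun s => gammaPDF β 1 (s-x) * f s) x
    rw [← h]
    refine lintegral_congr fun y => ?_
    simp only [add_sub_cancel_right]
    rw [add_comm x y]
  calc ∫⁻ x, ∫⁻ y, gammaPDF α 1 x * gammaPDF β 1 y * f (x+y) ∂volume ∂volume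
      = ∫⁻ x, ∫⁻ s, gammaPDF α 1 x * (gammaPDF β 1 (s-x) * f s) ∂volume ∂volume := by
        refine lintegral_congr fun x => ?_
        simp_rw [mul_assoc]
        rw [lintegral_const_mul _ (show Measurable fun y : ℝ => gammaPDF β 1 y * f (x+y) from hγβ.mul (hf.comp (measurable_const.add measurable_id))),
          step2 x, ← lintegral_const_mul _ (show Measurable fun s : ℝ => gammaPDF β 1 (s-x) * f s from (hγβ.comp (measurable_id.sub measurable_const)).mul hf)]
    _ = ∫⁻ s, ∫⁻ x, gammaPDF α 1 x * (gammaPDF β 1 (s-x) * f s) ∂volume ∂volume := by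
        refine lintegral_lintegral_swap ?_
        exact ((hγα.comp measurable_fst).mul
          (((hγβ.comp (measurable_snd.sub measurable_fst))).mul
            (hf.comp measurable_snd))).aemeasurable
    _ = ∫⁻ s, f s * ∫⁻ x, gammaPDF α 1 x * gammaPDF β 1 (s-x) ∂volume ∂volume := by
        refine lintegral_congr fun s => ?_
        rw [← lintegral_const_mul _ (show Measurable fun x : ℝ => gammaPDF α 1 x * gammaPDF β 1 (s-x) from hγα.mul (hγβ.comp (measurable_const.sub measurable_id)))]
        refine lintegral_congr fun x => ?_
        ring
    _ = ∫⁻ s in Ioi (0:ℝ), f s * ∫⁻ x, gammaPDF α 1 x * gammaPDF β 1 (s-x) ∂volume ∂volume := by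
        rw [← lintegral_add_compl (μ := (volume : Measure ℝ)) _ (measurableSet_Ioi (a := (0:ℝ)))]
        have : ∫⁻ s in (Ioi (0:ℝ))ᶜ, f s * ∫⁻ x, gammaPDF α 1 x * gammaPDF β 1 (s-x) ∂volume ∂volume = 0 := by
          rw [compl_Ioi]
          rw [setLIntegral_congr_fun_ae measurableSet_Iic (ae_of_all _ fun s (hs : s ≤ 0) => ?_),
            lintegral_zero]
          rw [gamma_conv_kernel_nonpos hs, mul_zero]
        rw [this, add_zero]
    _ = ENNReal.ofReal (rBeta α β / (Real.Gamma α * Real.Gamma β)) *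
        ∫⁻ s in Ioi (0:ℝ), ENNReal.ofReal (s ^ (α+β-1) * Real.exp (-s)) * f s := by
        rw [← lintegral_const_mul _ (show Measurable fun s : ℝ => ENNReal.ofReal (s ^ (α+β-1) * Real.exp (-s)) * f s from (ENNReal.measurable_ofReal.comp
          ((measurable_id'.pow_const _).mul (measurable_exp.comp measurable_id.neg))).mul hf)]
        refine setLIntegral_congr_fun_ae measurableSet_Ioi (ae_of_all _ fun s hs => ?_)
        rw [gamma_conv_kernel_pos hα hβ hs]
        ring

lemma ofReal_mul_gammaPDF {c : ℝ} (hc : 0 < c) (x : ℝ) :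
    ENNReal.ofReal x * gammaPDF c 1 x = ENNReal.ofReal c * gammaPDF (c+1) 1 x := by
  rcases lt_or_ge x 0 with h | h
  · rw [gammaPDF_of_neg h, gammaPDF_of_neg h, mul_zero, mul_zero]
  · rw [gammaPDF_of_nonneg h, gammaPDF_of_nonneg h, ← ENNReal.ofReal_mul h,
      ← ENNReal.ofReal_mul hc.le]
    congr 1
    rw [Real.one_rpow, Real.one_rpow, Real.Gamma_add_one hc.ne']
    have hG := Real.Gamma_pos_of_pos hc
    rcases eq_or_lt_of_le h with rfl | hx
    · rw [Real.zero_rpow (by linarith : c + 1 - 1 ≠ 0)]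
      rcases eq_or_lt_of_le (le_refl (0:ℝ)) with _ | _
      · ring
      · ring
    · have hxp : x ^ (c+1-1) = x ^ (c-1) * x := by
        rw [show c+1-1 = (c-1)+1 by ring, Real.rpow_add_one hx.ne']
      rw [hxp]
      field_simp

lemma lintegral_ofReal_mul_gammaPDF {c : ℝ} (hc : 0 < c) :
    ∫⁻ x, ENNReal.ofReal x * gammaPDF c 1 x = ENNReal.ofReal c := by
  simp_rw [ofReal_mul_gammaPDF hc]
  rw [lintegral_const_mul _ (measurable_gammaPDF _ _),
    lintegral_gammaPDF_eq_one (by linarith : (0:ℝ) < c + 1) one_pos, mul_one]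

lemma ae_nonneg_gammaMeasure {c : ℝ} : ∀ᵐ x ∂(gammaMeasure c 1), 0 ≤ x := by
  rw [ae_iff]
  have hset : {x : ℝ | ¬ 0 ≤ x} = Iio 0 := by ext x; simp [not_le]
  rw [hset, gammaMeasure, withDensity_apply _ measurableSet_Iio,
    lintegral_gammaPDF_of_nonpos le_rfl]

lemma integrable_id_gammaMeasure {c : ℝ} (hc : 0 < c) :
    Integrable id (gammaMeasure c 1) := by
  refine ⟨measurable_id.aestronglyMeasurable, ?_⟩
  have h1 : ∫⁻ x, (‖x‖₊ : ℝ≥0∞) ∂(gammaMeasure c 1)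
      = ∫⁻ x, ENNReal.ofReal x * gammaPDF c 1 x := by
    rw [gammaMeasure, lintegral_withDensity_eq_lintegral_mul _ (measurable_gammaPDF c 1)
      measurable_nnnorm.coe_nnreal_ennreal]
    refine lintegral_congr fun x => ?_
    rcases lt_or_ge x 0 with h | h
    · simp [gammaPDF_of_neg h]
    · simp only [Pi.mul_apply, id, ← enorm_eq_nnnorm, Real.enorm_eq_ofReal_abs, abs_of_nonneg h]
      ring
  rw [HasFiniteIntegral]
  simp only [id_eq]
  show ∫⁻ x, (‖x‖₊ : ℝ≥0∞) ∂(gammaMeasure c 1) < ∞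
  rw [h1, lintegral_ofReal_mul_gammaPDF hc]
  exact ENNReal.ofReal_lt_top

lemma double_moment_fst {α β : ℝ} (hα : 0 < α) (hβ : 0 < β) (f : ℝ → ℝ≥0∞) (hf : Measurable f) :
    ∫⁻ x, ∫⁻ y, gammaPDF α 1 x * (gammaPDF β 1 y * (f (x+y) * ENNReal.ofReal x)) ∂volume ∂volume
      = ENNReal.ofReal α * (ENNReal.ofReal (rBeta (α+1) β / (Real.Gamma (α+1) * Real.Gamma β)) *
          ∫⁻ s in Ioi (0:ℝ), ENNReal.ofReal (s ^ (α+β) * Real.exp (-s)) * f s) := by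
  have h1 : ∀ x y : ℝ, gammaPDF α 1 x * (gammaPDF β 1 y * (f (x+y) * ENNReal.ofReal x))
      = ENNReal.ofReal α * (gammaPDF (α+1) 1 x * gammaPDF β 1 y * f (x+y)) := by
    intro x y
    rw [show gammaPDF α 1 x * (gammaPDF β 1 y * (f (x+y) * ENNReal.ofReal x))
      = (ENNReal.ofReal x * gammaPDF α 1 x) * (gammaPDF β 1 y * f (x+y)) by ring,
      ofReal_mul_gammaPDF hα]
    ring
  simp_rw [h1]
  have hmeas1 : ∀ x : ℝ, Measurable fun y : ℝ =>
      gammaPDF (α+1) 1 x * gammaPDF β 1 y * f (x+y) :=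
    fun x => ((measurable_const.mul (measurable_gammaPDF β 1)).mul
      (hf.comp (measurable_const.add measurable_id)))
  have hmeas2 : Measurable fun x : ℝ =>
      ∫⁻ y, gammaPDF (α+1) 1 x * gammaPDF β 1 y * f (x+y) ∂volume := by
    refine Measurable.lintegral_prod_right ?_
    exact (((measurable_gammaPDF (α+1) 1).comp measurable_fst).mul
      ((measurable_gammaPDF β 1).comp measurable_snd)).mul
      (hf.comp (measurable_fst.add measurable_snd))
  calc ∫⁻ x, ∫⁻ y, ENNReal.ofReal α * (gammaPDF (α+1) 1 x * gammaPDF β 1 y * f (x+y)) ∂volume ∂volume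
      = ∫⁻ x, ENNReal.ofReal α * ∫⁻ y, gammaPDF (α+1) 1 x * gammaPDF β 1 y * f (x+y) ∂volume ∂volume := by
        exact lintegral_congr fun x => lintegral_const_mul _ (hmeas1 x)
    _ = ENNReal.ofReal α * ∫⁻ x, ∫⁻ y, gammaPDF (α+1) 1 x * gammaPDF β 1 y * f (x+y) ∂volume ∂volume :=
        lintegral_const_mul _ hmeas2
    _ = _ := by
        rw [gamma_conv (by linarith : (0:ℝ) < α + 1) hβ f hf,
          show α + 1 + β - 1 = α + β by ring]

lemma double_moment_snd {α β : ℝ} (hα : 0 < α) (hβ : 0 < β) (f : ℝ → ℝ≥0∞) (hf : Measurable f) :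
    ∫⁻ x, ∫⁻ y, gammaPDF α 1 x * (gammaPDF β 1 y * (f (x+y) * ENNReal.ofReal y)) ∂volume ∂volume
      = ENNReal.ofReal β * (ENNReal.ofReal (rBeta α (β+1) / (Real.Gamma α * Real.Gamma (β+1))) *
          ∫⁻ s in Ioi (0:ℝ), ENNReal.ofReal (s ^ (α+β) * Real.exp (-s)) * f s) := by
  have h1 : ∀ x y : ℝ, gammaPDF α 1 x * (gammaPDF β 1 y * (f (x+y) * ENNReal.ofReal y))
      = ENNReal.ofReal β * (gammaPDF α 1 x * gammaPDF (β+1) 1 y * f (x+y)) := by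
    intro x y
    rw [show gammaPDF α 1 x * (gammaPDF β 1 y * (f (x+y) * ENNReal.ofReal y))
      = (ENNReal.ofReal y * gammaPDF β 1 y) * (gammaPDF α 1 x * f (x+y)) by ring,
      ofReal_mul_gammaPDF hβ]
    ring
  simp_rw [h1]
  have hmeas1 : ∀ x : ℝ, Measurable fun y : ℝ =>
      gammaPDF α 1 x * gammaPDF (β+1) 1 y * f (x+y) :=
    fun x => ((measurable_const.mul (measurable_gammaPDF (β+1) 1)).mul
      (hf.comp (measurable_const.add measurable_id)))
  have hmeas2 : Measurable fun x : ℝ =>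
      ∫⁻ y, gammaPDF α 1 x * gammaPDF (β+1) 1 y * f (x+y) ∂volume := by
    refine Measurable.lintegral_prod_right ?_
    exact (((measurable_gammaPDF α 1).comp measurable_fst).mul
      ((measurable_gammaPDF (β+1) 1).comp measurable_snd)).mul
      (hf.comp (measurable_fst.add measurable_snd))
  calc ∫⁻ x, ∫⁻ y, ENNReal.ofReal β * (gammaPDF α 1 x * gammaPDF (β+1) 1 y * f (x+y)) ∂volume ∂volume
      = ∫⁻ x, ENNReal.ofReal β * ∫⁻ y, gammaPDF α 1 x * gammaPDF (β+1) 1 y * f (x+y) ∂volume ∂volume := by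
        exact lintegral_congr fun x => lintegral_const_mul _ (hmeas1 x)
    _ = ENNReal.ofReal β * ∫⁻ x, ∫⁻ y, gammaPDF α 1 x * gammaPDF (β+1) 1 y * f (x+y) ∂volume ∂volume :=
        lintegral_const_mul _ hmeas2
    _ = _ := by
        rw [gamma_conv hα (by linarith : (0:ℝ) < β + 1) f hf,
          show α + (β + 1) - 1 = α + β by ring]


/-- **Conditional expectation identity for Gamma random variables** (step (a) in the
paper's proof of Lemma 4).  If `X ~ Gamma(a, 1)` and `Y ~ Gamma(b, 1)` are independent,
then `E[X | σ(X+Y)] = (a/(a+b)) (X+Y)` almost surely. -/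
theorem gamma_condExp_of_sum
    {Ω : Type*} [MeasurableSpace Ω] (μ : Measure Ω) [IsProbabilityMeasure μ]
    (a b : ℝ) (ha : 0 < a) (hb : 0 < b)
    (X Y : Ω → ℝ) (hXmeas : Measurable X) (hYmeas : Measurable Y)
    (hindep : IndepFun X Y μ)
    (hX : Measure.map X μ = gammaMeasure a 1)
    (hY : Measure.map Y μ = gammaMeasure b 1) :
    μ[X | MeasurableSpace.comap (fun ω => X ω + Y ω) Real.measurableSpace]
      =ᵐ[μ] fun ω => a / (a + b) * (X ω + Y ω) := by
  have hab : 0 < a + b := by linarith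
  set c : ℝ := a / (a + b) with hcdef
  have hc : 0 ≤ c := by positivity
  set S : Ω → ℝ := fun ω => X ω + Y ω with hSdef
  have hSmeas : Measurable S := hXmeas.add hYmeas
  have hm : MeasurableSpace.comap S Real.measurableSpace ≤ ‹MeasurableSpace Ω› :=
    hSmeas.comap_le
  haveI : SigmaFinite (μ.trim hm) := inferInstance
  haveI hΓa : IsProbabilityMeasure (gammaMeasure a 1) := isProbabilityMeasure_gammaMeasure ha one_pos
  haveI hΓb : IsProbabilityMeasure (gammaMeasure b 1) := isProbabilityMeasure_gammaMeasure hb one_pos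
  haveI : IsProbabilityMeasure ((volume : Measure ℝ).withDensity (gammaPDF a 1)) :=
    isProbabilityMeasure_gammaMeasure ha one_pos
  haveI : IsProbabilityMeasure ((volume : Measure ℝ).withDensity (gammaPDF b 1)) :=
    isProbabilityMeasure_gammaMeasure hb one_pos
  -- joint distribution
  have hprod : μ.map (fun ω => (X ω, Y ω)) = (gammaMeasure a 1).prod (gammaMeasure b 1) := by
    rw [← hX, ← hY]
    exact (indepFun_iff_map_prod_eq_prod_map_map hXmeas.aemeasurable hYmeas.aemeasurable).mp hindep
  -- transfer to Lebesgue double integrals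
  have transfer : ∀ F : ℝ × ℝ → ℝ≥0∞, Measurable F →
      ∫⁻ ω, F (X ω, Y ω) ∂μ
        = ∫⁻ x, ∫⁻ y, gammaPDF a 1 x * (gammaPDF b 1 y * F (x, y)) ∂volume ∂volume := by
    intro F hF
    rw [← lintegral_map hF (hXmeas.prodMk hYmeas), hprod, lintegral_prod _ hF.aemeasurable,
      gammaMeasure, gammaMeasure]
    rw [lintegral_withDensity_eq_lintegral_mul _ (measurable_gammaPDF a 1)
      (show Measurable fun x : ℝ => ∫⁻ y, F (x, y) ∂((volume : Measure ℝ).withDensity (gammaPDF b 1))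
        from Measurable.lintegral_prod_right
          (show Measurable (Function.uncurry fun x y : ℝ => F (x, y)) from hF))]
    refine lintegral_congr fun x => ?_
    simp only [Pi.mul_apply]
    rw [lintegral_withDensity_eq_lintegral_mul _ (measurable_gammaPDF b 1)
      (show Measurable fun y : ℝ => F (x, y) from hF.comp measurable_prodMk_left)]
    simp only [Pi.mul_apply]
    rw [← lintegral_const_mul _ (show Measurable fun y : ℝ => gammaPDF b 1 y * F (x, y) from
      (measurable_gammaPDF b 1).mul (hF.comp measurable_prodMk_left))]
  -- a.e. nonnegativity
  have hXae : ∀ᵐ ω ∂μ, 0 ≤ X ω := by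
    have := ae_nonneg_gammaMeasure (c := a)
    rw [← hX, ae_map_iff hXmeas.aemeasurable measurableSet_Ici] at this
    exact this
  have hYae : ∀ᵐ ω ∂μ, 0 ≤ Y ω := by
    have := ae_nonneg_gammaMeasure (c := b)
    rw [← hY, ae_map_iff hYmeas.aemeasurable measurableSet_Ici] at this
    exact this
  -- integrability
  have hXint : Integrable X μ := by
    have h := integrable_map_measure (f := X) (g := id) (μ := μ)
      measurable_id.aestronglyMeasurable hXmeas.aemeasurable
    rw [hX] at h
    exact h.mp (integrable_id_gammaMeasure ha)
  have hYint : Integrable Y μ := by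
    have h := integrable_map_measure (f := Y) (g := id) (μ := μ)
      measurable_id.aestronglyMeasurable hYmeas.aemeasurable
    rw [hY] at h
    exact h.mp (integrable_id_gammaMeasure hb)
  have hgint : Integrable (fun ω => c * S ω) μ := (hXint.add hYint).const_mul c
  -- measurability of the candidate w.r.t. m
  have hSm : Measurable[MeasurableSpace.comap S Real.measurableSpace] S := fun t ht => ⟨t, ht, rfl⟩
  have hgm : AEStronglyMeasurable[MeasurableSpace.comap S Real.measurableSpace] (fun ω => c * S ω) μ :=
    ⟨fun ω => c * S ω, (hSm.const_mul c).stronglyMeasurable, Filter.EventuallyEq.refl _ _⟩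
  -- main set-integral identity
  have hset : ∀ s : Set Ω, MeasurableSet[MeasurableSpace.comap S Real.measurableSpace] s → μ s < ∞ →
      ∫ ω in s, c * S ω ∂μ = ∫ ω in s, X ω ∂μ := by
    rintro s ⟨B, hB, rfl⟩ -
    set f : ℝ → ℝ≥0∞ := B.indicator 1 with hfdef
    have hf : Measurable f := measurable_one.indicator hB
    set M : ℝ≥0∞ := ∫⁻ t in Ioi (0:ℝ), ENNReal.ofReal (t ^ (a+b) * Real.exp (-t)) * f t with hMdef
    set K : ℝ≥0∞ := ENNReal.ofReal (rBeta (a+1) b / (Real.Gamma (a+1) * Real.Gamma b)) with hKdef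
    have hKeq : ENNReal.ofReal (rBeta a (b+1) / (Real.Gamma a * Real.Gamma (b+1))) = K := by
      rw [hKdef]
      congr 1
      rw [Real.Gamma_add_one ha.ne', Real.Gamma_add_one hb.ne']
      have hGa := Real.Gamma_pos_of_pos ha
      have hGb := Real.Gamma_pos_of_pos hb
      have hrec := rBeta_recurrence ha hb
      field_simp
      nlinarith [hrec, mul_pos hGa hGb]
    have hindX : ∀ ω, (S ⁻¹' B).indicator (fun ω => ENNReal.ofReal (X ω)) ω
        = f (S ω) * ENNReal.ofReal (X ω) := by
      intro ω
      by_cases h : S ω ∈ B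
      · simp [hfdef, Set.indicator_of_mem, h, Set.mem_preimage]
      · simp [hfdef, Set.indicator_of_notMem, h, Set.mem_preimage]
    have hindY : ∀ ω, (S ⁻¹' B).indicator (fun ω => ENNReal.ofReal (Y ω)) ω
        = f (S ω) * ENNReal.ofReal (Y ω) := by
      intro ω
      by_cases h : S ω ∈ B
      · simp [hfdef, Set.indicator_of_mem, h, Set.mem_preimage]
      · simp [hfdef, Set.indicator_of_notMem, h, Set.mem_preimage]
    have hIX : ∫⁻ ω in S ⁻¹' B, ENNReal.ofReal (X ω) ∂μ = ENNReal.ofReal a * (K * M) := by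
      rw [← lintegral_indicator (hSmeas hB), lintegral_congr hindX,
        transfer (fun p => f (p.1 + p.2) * ENNReal.ofReal p.1)
          ((hf.comp (measurable_fst.add measurable_snd)).mul
            (ENNReal.measurable_ofReal.comp measurable_fst)),
        double_moment_fst ha hb f hf]
    have hIY : ∫⁻ ω in S ⁻¹' B, ENNReal.ofReal (Y ω) ∂μ = ENNReal.ofReal b * (K * M) := by
      rw [← lintegral_indicator (hSmeas hB), lintegral_congr hindY,
        transfer (fun p => f (p.1 + p.2) * ENNReal.ofReal p.2)
          ((hf.comp (measurable_fst.add measurable_snd)).mul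
            (ENNReal.measurable_ofReal.comp measurable_snd)),
        double_moment_snd ha hb f hf, hKeq]
    have hIS : ∫⁻ ω in S ⁻¹' B, ENNReal.ofReal (c * S ω) ∂μ = ENNReal.ofReal a * (K * M) := by
      have hae : ∀ᵐ ω ∂μ, ENNReal.ofReal (c * S ω)
          = ENNReal.ofReal c * (ENNReal.ofReal (X ω) + ENNReal.ofReal (Y ω)) := by
        filter_upwards [hXae, hYae] with ω h1 h2
        rw [ENNReal.ofReal_mul hc, ENNReal.ofReal_add h1 h2]
      rw [lintegral_congr_ae (ae_restrict_of_ae hae),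
        lintegral_const_mul _ (show Measurable fun ω => ENNReal.ofReal (X ω) + ENNReal.ofReal (Y ω)
          from (ENNReal.measurable_ofReal.comp hXmeas).add (ENNReal.measurable_ofReal.comp hYmeas)),
        lintegral_add_left (show Measurable fun ω => ENNReal.ofReal (X ω)
          from ENNReal.measurable_ofReal.comp hXmeas), hIX, hIY,
        ← add_mul, ← ENNReal.ofReal_add ha.le hb.le, ← mul_assoc,
        ← ENNReal.ofReal_mul hc]
      congr 2
      rw [hcdef]
      field_simp
    have h1 : ∫ ω in S ⁻¹' B, X ω ∂μ = (∫⁻ ω in S ⁻¹' B, ENNReal.ofReal (X ω) ∂μ).toReal :=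
      integral_eq_lintegral_of_nonneg_ae (ae_restrict_of_ae hXae)
        hXmeas.aestronglyMeasurable.restrict
    have h2 : ∫ ω in S ⁻¹' B, c * S ω ∂μ
        = (∫⁻ ω in S ⁻¹' B, ENNReal.ofReal (c * S ω) ∂μ).toReal := by
      refine integral_eq_lintegral_of_nonneg_ae (ae_restrict_of_ae ?_)
        ((hSmeas.const_mul c).aestronglyMeasurable.restrict)
      filter_upwards [hXae, hYae] with ω h1 h2
      exact mul_nonneg hc (add_nonneg h1 h2)
    rw [h1, h2, hIX, hIS]
  exact (ae_eq_condExp_of_forall_setIntegral_eq hm hXint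
    (fun s _ _ => hgint.integrableOn) hset hgm).symm
end

section
/- Fix S ≥ 2, H > 0, a vector v ∈ [0,H]^S, and parameters α ∈ (0,∞)^S with n := Σ_{i=1}^S α_i ≥ 2. Let G_1, …, G_S be independent with G_i Gamma-distributed with shape α_i and rate 1, let P_i = G_i/Σ_j G_j (so P is Dirichlet(α)-distributed), and let p̂ = α/n be the mean of P. Then for every δ ∈ (0,1], the probability that |Σ_i (P_i − p̂_i) v_i| ≥ H√(2 log(2/δ)/n) is at most δ. -/
open MeasureTheory ProbabilityTheory

open MeasureTheory ProbabilityTheory Real Set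
open scoped ENNReal NNReal

/- ### Log inequalities -/

lemma log_ge_sub_half_sq {y : ℝ} (hy : 0 ≤ y) : y - y^2/2 ≤ Real.log (1+y) := by
  set f : ℝ → ℝ := fun y => Real.log (1+y) - y + y^2/2 with hf
  have hd : ∀ x : ℝ, 0 ≤ x → HasDerivAt f ((1+x)⁻¹ - 1 + x) x := by
    intro x hx
    have h1 : HasDerivAt (fun y : ℝ => 1 + y) 1 x := (hasDerivAt_id x).const_add 1
    have h2 : HasDerivAt (fun y : ℝ => Real.log (1+y)) (1/(1+x)) x :=
      h1.log (by positivity)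
    have h3 : HasDerivAt (fun y : ℝ => y^2/2) x x := by
      simpa using ((hasDerivAt_pow 2 x).div_const 2)
    have := (h2.sub (hasDerivAt_id x)).add h3
    rw [one_div] at this
    exact this
  have hmono : MonotoneOn f (Set.Ici 0) := by
    apply monotoneOn_of_deriv_nonneg (convex_Ici 0)
    · apply ContinuousOn.add (ContinuousOn.sub ?_ (continuous_id.continuousOn))
        (by fun_prop)
      exact ContinuousOn.log (by fun_prop) (fun x hx => by
        simp only [mem_Ici] at hx; positivity)
    · intro x hx
      rw [interior_Ici] at hx
      exact (hd x (le_of_lt hx)).differentiableAt.differentiableWithinAt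
    · intro x hx
      rw [interior_Ici] at hx
      have hx' : (0:ℝ) < x := hx
      rw [(hd x hx.le).deriv]
      have h1x : (0:ℝ) < 1 + x := by linarith
      rw [show (1+x)⁻¹ - 1 + x = x^2/(1+x) by field_simp; ring]
      positivity
  have h0 : f 0 = 0 := by simp [hf]
  have := hmono (Set.mem_Ici.2 le_rfl) (Set.mem_Ici.2 hy) hy
  rw [h0] at this
  simp only [hf] at this
  linarith

lemma log_le_half_sub_inv {w : ℝ} (hw : 1 ≤ w) : Real.log w ≤ (w - w⁻¹)/2 := by
  set f : ℝ → ℝ := fun w => (w - w⁻¹)/2 - Real.log w with hf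
  have hd : ∀ x : ℝ, 0 < x → HasDerivAt f ((1 + x⁻¹^2)/2 - x⁻¹) x := by
    intro x hx
    have h1 : HasDerivAt (fun y : ℝ => y - y⁻¹) (1 - -(x^2)⁻¹) x :=
      (hasDerivAt_id x).sub (hasDerivAt_inv hx.ne')
    have h2 := (h1.div_const 2).sub (Real.hasDerivAt_log hx.ne')
    exact h2.congr_deriv (by ring)
  have hmono : MonotoneOn f (Set.Ici 1) := by
    apply monotoneOn_of_deriv_nonneg (convex_Ici 1)
    · apply ContinuousOn.sub
      · apply ContinuousOn.div_const
        apply ContinuousOn.sub (continuous_id.continuousOn)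
        exact ContinuousOn.inv₀ (continuous_id.continuousOn)
          (fun x hx => by simp only [mem_Ici] at hx; positivity)
      · exact ContinuousOn.log (continuous_id.continuousOn)
          (fun x hx => by simp only [mem_Ici] at hx; positivity)
    · intro x hx
      rw [interior_Ici] at hx
      exact (hd x (lt_trans one_pos hx)).differentiableAt.differentiableWithinAt
    · intro x hx
      rw [interior_Ici] at hx
      have hx0 : (0:ℝ) < x := lt_trans one_pos hx
      rw [(hd x hx0).deriv]
      rw [show (1 + x⁻¹^2)/2 - x⁻¹ = (x-1)^2/(2*x^2) by field_simp; ring]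
      positivity
  have h0 : f 1 = 0 := by simp [hf]
  have := hmono (Set.mem_Ici.2 le_rfl) (Set.mem_Ici.2 hw) hw
  rw [h0] at this
  simp only [hf] at this
  linarith

/-- The key pointwise bound: for `x ≤ m`, `0 ≤ m < 1`,
`-log (1-x) ≤ x + x²/(2(1-m))`. -/
lemma neg_log_one_sub_le {x m : ℝ} (hm0 : 0 ≤ m) (hm1 : m < 1) (hxm : x ≤ m) :
    -Real.log (1-x) ≤ x + x^2/(2*(1-m)) := by
  have h1m : (0:ℝ) < 1 - m := by linarith
  rcases le_or_gt x 0 with hx | hx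
  · -- x ≤ 0 : -log(1-x) ≤ x + x²/2 ≤ x + x²/(2(1-m))
    have hy : 0 ≤ -x := by linarith
    have := log_ge_sub_half_sq hy
    have hlog : -x - x^2/2 ≤ Real.log (1-x) := by
      have : 1 + -x = 1 - x := by ring
      rw [this] at *
      convert log_ge_sub_half_sq hy using 2 <;> ring_nf
    have h2 : x^2/2 ≤ x^2/(2*(1-m)) := by
      apply div_le_div_of_nonneg_left (by positivity) (by positivity)
      nlinarith
    linarith
  · -- 0 < x ≤ m < 1 : -log(1-x) = log(1/(1-x)) ≤ x + x²/(2(1-x)) ≤ ...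
    have hx1 : x < 1 := lt_of_le_of_lt hxm hm1
    have h1x : (0:ℝ) < 1 - x := by linarith
    have hw : 1 ≤ (1-x)⁻¹ := by
      rw [le_inv_comm₀] <;> try positivity
      · linarith
    have := log_le_half_sub_inv hw
    rw [Real.log_inv] at this
    have hid : ((1-x)⁻¹ - ((1-x)⁻¹)⁻¹)/2 = x + x^2/(2*(1-x)) := by
      rw [inv_inv]; field_simp; ring
    rw [hid] at this
    have h2 : x^2/(2*(1-x)) ≤ x^2/(2*(1-m)) := by
      apply div_le_div_of_nonneg_left (by positivity) (by positivity)
      nlinarith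
    linarith

/- ### Gamma MGF -/

lemma gammaPDFReal_mul_exp_integrableOn_Ici {a θ : ℝ} (ha : 0 < a) (hθ : θ < 1) :
    IntegrableOn (fun x => gammaPDFReal a 1 x * Real.exp (θ * x)) (Ici 0) := by
  have hb : (0:ℝ) < 1 - θ := by linarith
  have h0 : IntegrableOn (fun x : ℝ => x ^ (a-1) * Real.exp (-(1-θ) * x)) (Ioi 0) := by
    have h1 := integrableOn_rpow_mul_exp_neg_mul_rpow (p := 1) (s := a - 1) (b := 1-θ)
      (by linarith) one_pos hb
    apply h1.congr_fun ?_ measurableSet_Ioi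
    intro x hx
    simp [Real.rpow_one]
  rw [integrableOn_Ici_iff_integrableOn_Ioi]
  have h2 : IntegrableOn
      (fun x : ℝ => (1:ℝ)^a / Real.Gamma a * (x ^ (a-1) * Real.exp (-(1-θ) * x))) (Ioi 0) :=
    h0.const_mul _
  apply h2.congr_fun ?_ measurableSet_Ioi
  intro x hx
  have hx0 : (0:ℝ) < x := hx
  simp only [gammaPDFReal, if_pos hx0.le]
  rw [show (-(1-θ) * x : ℝ) = -(1*x) + θ*x by ring, Real.exp_add]
  ring

lemma gammaPDFReal_mul_exp_ae_zero_Iic {a θ : ℝ} :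
    ∀ᵐ x : ℝ, x ∈ Iic (0:ℝ) → gammaPDFReal a 1 x * Real.exp (θ * x) = 0 := by
  filter_upwards [compl_mem_ae_iff.2 (volume_singleton (a := (0:ℝ)))] with x hx0 hx
  have hxne : x ≠ 0 := by simpa using hx0
  have hxlt : x < 0 := lt_of_le_of_ne hx hxne
  simp [gammaPDFReal, if_neg (not_le.2 hxlt)]

lemma integrable_gammaPDFReal_mul_exp {a θ : ℝ} (ha : 0 < a) (hθ : θ < 1) :
    Integrable (fun x => gammaPDFReal a 1 x * Real.exp (θ * x)) := by
  rw [← integrableOn_univ, ← Iic_union_Ici (a := (0:ℝ))]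
  refine IntegrableOn.union ?_ (gammaPDFReal_mul_exp_integrableOn_Ici ha hθ)
  apply Integrable.congr (integrableOn_zero (s := Iic (0:ℝ)))
  apply (ae_restrict_iff' measurableSet_Iic).2
  filter_upwards [gammaPDFReal_mul_exp_ae_zero_Iic (a := a) (θ := θ)] with x h hx
  exact (h hx).symm

lemma gammaMeasure_eq_withDensity_nnreal (a : ℝ) :
    gammaMeasure a 1
      = volume.withDensity (fun x => ((gammaPDFReal a 1 x).toNNReal : ℝ≥0∞)) := rfl

lemma integrable_exp_gammaMeasure {a θ : ℝ} (ha : 0 < a) (hθ : θ < 1) :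
    Integrable (fun x => Real.exp (θ * x)) (gammaMeasure a 1) := by
  rw [gammaMeasure_eq_withDensity_nnreal,
    integrable_withDensity_iff_integrable_smul ((measurable_gammaPDFReal a 1).real_toNNReal)]
  apply (integrable_gammaPDFReal_mul_exp ha hθ).congr
  filter_upwards with x
  rw [NNReal.smul_def, smul_eq_mul, Real.coe_toNNReal _ (gammaPDFReal_nonneg ha one_pos x)]

lemma integral_exp_gammaMeasure {a θ : ℝ} (ha : 0 < a) (hθ : θ < 1) :
    ∫ x, Real.exp (θ * x) ∂(gammaMeasure a 1) = (1 - θ) ^ (-a) := by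
  have hb : (0:ℝ) < 1 - θ := by linarith
  rw [gammaMeasure_eq_withDensity_nnreal,
    integral_withDensity_eq_integral_smul ((measurable_gammaPDFReal a 1).real_toNNReal)]
  have hsm : ∀ x : ℝ, (gammaPDFReal a 1 x).toNNReal • Real.exp (θ * x)
      = gammaPDFReal a 1 x * Real.exp (θ * x) := by
    intro x
    rw [NNReal.smul_def, smul_eq_mul, Real.coe_toNNReal _ (gammaPDFReal_nonneg ha one_pos x)]
  simp_rw [hsm]
  rw [← intervalIntegral.integral_Iic_add_Ioi (b := (0:ℝ))
    ((integrable_gammaPDFReal_mul_exp ha hθ).integrableOn)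
    ((integrable_gammaPDFReal_mul_exp ha hθ).integrableOn)]
  have hIic : ∫ x in Iic (0:ℝ), gammaPDFReal a 1 x * Real.exp (θ * x) = 0 := by
    rw [setIntegral_congr_ae measurableSet_Iic
      (g := fun _ : ℝ => (0:ℝ)) gammaPDFReal_mul_exp_ae_zero_Iic]
    simp
  have hIoi : ∫ x in Ioi (0:ℝ), gammaPDFReal a 1 x * Real.exp (θ * x)
      = (1:ℝ)^a / Real.Gamma a * ∫ x in Ioi (0:ℝ), x ^ (a-1) * Real.exp (-((1-θ) * x)) := by
    rw [← integral_const_mul]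
    apply setIntegral_congr_fun measurableSet_Ioi
    intro x hx
    have hx0 : (0:ℝ) < x := hx
    simp only [gammaPDFReal, if_pos hx0.le]
    rw [show (-((1-θ) * x) : ℝ) = -(1*x) + θ*x by ring, Real.exp_add]
    ring
  rw [hIic, hIoi, integral_rpow_mul_exp_neg_mul_Ioi ha hb, zero_add, Real.one_rpow,
    Real.div_rpow zero_le_one hb.le, Real.one_rpow, Real.rpow_neg hb.le]
  have hg := (Real.Gamma_pos_of_pos ha).ne'
  field_simp

/- ### The analytic optimization -/

lemma chernoff_exponent_bound {S : ℕ} (α v : Fin S → ℝ) (hα : ∀ i, 0 < α i)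
    (hv : ∀ i, v i ∈ Icc (0:ℝ) 1) (hn : 0 < ∑ i, α i) {t : ℝ} (ht : 0 < t)
    (hct : t ≤ 1 - (∑ i, α i * v i) / (∑ i, α i)) :
    ∃ s : ℝ, 0 ≤ s ∧
      (∀ i, s * (v i - (∑ i, α i * v i) / (∑ i, α i) - t) < 1) ∧
      (∏ i, (1 - s * (v i - (∑ i, α i * v i) / (∑ i, α i) - t)) ^ (-(α i))
        ≤ Real.exp (-((∑ i, α i) * t^2/2))) := by
  set n : ℝ := ∑ i, α i with hn_def
  set c : ℝ := (∑ i, α i * v i) / n with hc_def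
  have hc0 : 0 ≤ c := by
    apply div_nonneg _ hn.le
    exact Finset.sum_nonneg fun i _ => mul_nonneg (hα i).le (hv i).1
  have hc1 : c ≤ 1 := by
    rw [hc_def, div_le_one hn]
    apply Finset.sum_le_sum fun i _ => ?_
    nth_rewrite 2 [show α i = α i * 1 by ring]
    exact mul_le_mul_of_nonneg_left (hv i).2 (hα i).le
  have hsumc : ∑ i, α i * v i = c * n := by
    rw [hc_def]; field_simp
  set b : ℝ := 1 - c - t with hb_def
  have hb0 : 0 ≤ b := by rw [hb_def]; linarith
  set V : ℝ := c*(1-c) + t^2 with hV_def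
  have hV : 0 < V := by nlinarith
  set D : ℝ := (1-c)*(c+t) with hD_def
  have hD_eq : D = V + t*b := by rw [hD_def, hV_def, hb_def]; ring
  have hD : 0 < D := by rw [hD_eq]; nlinarith
  have hD1 : D ≤ 1 := by rw [hD_def]; nlinarith
  set s : ℝ := t / D with hs_def
  have hs0 : 0 ≤ s := div_nonneg ht.le hD.le
  set w : Fin S → ℝ := fun i => v i - c - t with hw_def
  set m : ℝ := s * b with hm_def
  have hm0 : 0 ≤ m := mul_nonneg hs0 hb0
  have hm1 : m < 1 := by
    rw [hm_def, hs_def, div_mul_eq_mul_div, div_lt_one hD, hD_eq]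
    nlinarith
  have h1m : 1 - m = V / D := by
    rw [hm_def, hs_def, hD_eq]
    field_simp
    ring
  have hwb : ∀ i, w i ≤ b := by
    intro i
    simp only [hw_def, hb_def]
    linarith [(hv i).2]
  have hswm : ∀ i, s * w i ≤ m := fun i => mul_le_mul_of_nonneg_left (hwb i) hs0
  have hsw1 : ∀ i, s * w i < 1 := fun i => lt_of_le_of_lt (hswm i) hm1
  refine ⟨s, hs0, hsw1, ?_⟩
  -- sum identities
  have hsum1 : ∑ i, α i * w i = -(t*n) := by
    simp only [hw_def]
    have : ∀ i, α i * (v i - c - t) = α i * v i - (c+t) * α i := by intro i; ring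
    simp_rw [this]
    rw [Finset.sum_sub_distrib, ← Finset.mul_sum, hsumc, ← hn_def]
    ring
  have hsum2 : ∑ i, α i * (w i)^2 ≤ n * V := by
    have hpt : ∀ i, α i * (w i)^2 ≤ α i * ((1-2*c-2*t)*(v i - c) + c*(1-c) + t^2) := by
      intro i
      apply mul_le_mul_of_nonneg_left _ (hα i).le
      have h1 := (hv i).1
      have h2 := (hv i).2
      simp only [hw_def]
      nlinarith
    calc ∑ i, α i * (w i)^2
        ≤ ∑ i, α i * ((1-2*c-2*t)*(v i - c) + c*(1-c) + t^2) :=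
          Finset.sum_le_sum fun i _ => hpt i
      _ = n * V := by
          have he : ∀ i, α i * ((1-2*c-2*t)*(v i - c) + c*(1-c) + t^2)
              = (1-2*c-2*t)*(α i * v i) - ((1-2*c-2*t)*c)*(α i) + V*(α i) := by
            intro i; rw [hV_def]; ring
          simp_rw [he]
          rw [Finset.sum_add_distrib, Finset.sum_sub_distrib, ← Finset.mul_sum,
            ← Finset.mul_sum, ← Finset.mul_sum, hsumc, ← hn_def]
          ring
  -- combine
  have h1mpos : 0 < 1 - m := by linarith
  have hpos : ∀ i, 0 < 1 - s * w i := fun i => by linarith [hsw1 i]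
  have hlog : ∀ i, -(α i) * Real.log (1 - s * w i)
      ≤ s * (α i * w i) + (s^2/(2*(1-m))) * (α i * (w i)^2) := by
    intro i
    have hk := neg_log_one_sub_le hm0 hm1 (hswm i)
    have hk2 := mul_le_mul_of_nonneg_left hk (hα i).le
    calc -(α i) * Real.log (1-s*w i) = α i * (-Real.log (1-s*w i)) := by ring
      _ ≤ α i * (s*w i + (s*w i)^2/(2*(1-m))) := hk2
      _ = s * (α i * w i) + (s^2/(2*(1-m))) * (α i * (w i)^2) := by
          field_simp
  have hsum : ∑ i, (-(α i) * Real.log (1 - s*w i)) ≤ -(n * t^2/2) := by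
    calc ∑ i, (-(α i) * Real.log (1-s*w i))
        ≤ ∑ i, (s * (α i * w i) + (s^2/(2*(1-m))) * (α i * (w i)^2)) :=
          Finset.sum_le_sum fun i _ => hlog i
      _ = s * (∑ i, α i * w i) + (s^2/(2*(1-m))) * (∑ i, α i * (w i)^2) := by
          rw [Finset.sum_add_distrib, ← Finset.mul_sum, ← Finset.mul_sum]
      _ ≤ s * (-(t*n)) + (s^2/(2*(1-m))) * (n*V) := by
          rw [hsum1]
          have hnn : 0 ≤ s^2/(2*(1-m)) := by positivity
          exact add_le_add_right (mul_le_mul_of_nonneg_left hsum2 hnn) _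
      _ = -(n*t^2/(2*D)) := by
          rw [h1m, hs_def]
          field_simp
          ring
      _ ≤ -(n*t^2/2) := by
          rw [neg_le_neg_iff]
          apply div_le_div_of_nonneg_left (by positivity) (by linarith) (by linarith)
  calc ∏ i, (1 - s*w i)^(-(α i))
      = ∏ i, Real.exp (-(α i) * Real.log (1-s*w i)) := by
        apply Finset.prod_congr rfl
        intro i _
        rw [Real.rpow_def_of_pos (hpos i), mul_comm]
    _ = Real.exp (∑ i, -(α i) * Real.log (1-s*w i)) := (Real.exp_sum _ _).symm
    _ ≤ Real.exp (-(n * t^2/2)) := Real.exp_le_exp.2 hsum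

/- ### Chernoff bound for linear combinations of independent Gammas -/

lemma gamma_linear_chernoff {Ω : Type*} [MeasurableSpace Ω] (μ : Measure Ω)
    [IsProbabilityMeasure μ] {S : ℕ} (α : Fin S → ℝ) (hα : ∀ i, 0 < α i)
    (G : Fin S → Ω → ℝ) (hGmeas : ∀ i, Measurable (G i))
    (hGindep : iIndepFun G μ)
    (hGlaw : ∀ i, Measure.map (G i) μ = gammaMeasure (α i) 1)
    (w : Fin S → ℝ) (s : ℝ) (hs : 0 ≤ s) (hsw : ∀ i, s * w i < 1) :
    μ {ω | 0 ≤ ∑ i, w i * G i ω} ≤ ENNReal.ofReal (∏ i, (1 - s * w i) ^ (-(α i))) := by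
  set X : Fin S → Ω → ℝ := fun i ω => w i * G i ω with hX_def
  have hXmeas : ∀ i, Measurable (X i) := fun i => (hGmeas i).const_mul (w i)
  have hXindep : iIndepFun X μ :=
    hGindep.comp (fun i x => w i * x) (fun i => measurable_const_mul _)
  have hInt : ∀ i, Integrable (fun ω => Real.exp (s * X i ω)) μ := by
    intro i
    have h1 : Integrable (fun x => Real.exp ((s * w i) * x)) (gammaMeasure (α i) 1) :=
      integrable_exp_gammaMeasure (hα i) (hsw i)
    rw [← hGlaw i] at h1
    have h2 := (integrable_map_measure h1.aestronglyMeasurable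
      (hGmeas i).aemeasurable).1 h1
    apply h2.congr
    filter_upwards with ω
    simp only [Function.comp_apply, hX_def]
    ring_nf
  have hmgf : ∀ i, mgf (X i) μ s = (1 - s * w i) ^ (-(α i)) := by
    intro i
    have h1 : mgf (X i) μ s = ∫ x, Real.exp ((s * w i) * x) ∂(Measure.map (G i) μ) := by
      rw [integral_map (hGmeas i).aemeasurable
        (((measurable_const_mul _).exp).aestronglyMeasurable)]
      rw [mgf]
      congr 1
      funext ω
      simp only [hX_def]
      ring_nf
    rw [h1, hGlaw i, integral_exp_gammaMeasure (hα i) (hsw i)]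
  have hIntSum : Integrable (fun ω => Real.exp (s * (∑ i, X i) ω)) μ :=
    iIndepFun.integrable_exp_mul_sum hXindep hXmeas (fun i _ => hInt i)
  have hch := measure_ge_le_exp_mul_mgf (μ := μ) (X := ∑ i, X i) (ε := 0) hs hIntSum
  rw [iIndepFun.mgf_sum hXindep hXmeas] at hch
  simp only [mul_zero, neg_zero, Real.exp_zero, one_mul] at hch
  simp_rw [hmgf] at hch
  have hev : {ω | 0 ≤ ∑ i, w i * G i ω} = {ω | 0 ≤ (∑ i, X i) ω} := by
    ext ω
    simp [hX_def, Finset.sum_apply]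
  rw [hev]
  rw [ENNReal.le_ofReal_iff_toReal_le (measure_ne_top μ _) ?_]
  · exact hch
  · exact Finset.prod_nonneg fun i _ =>
      Real.rpow_nonneg (by linarith [hsw i]) _

/- ### One-sided tail bound -/

lemma dirichlet_one_sided {Ω : Type*} [MeasurableSpace Ω] (μ : Measure Ω)
    [IsProbabilityMeasure μ] {S : ℕ} (α : Fin S → ℝ) (hα : ∀ i, 0 < α i)
    (hn : 0 < ∑ i, α i)
    (G : Fin S → Ω → ℝ) (hGmeas : ∀ i, Measurable (G i))
    (hGindep : iIndepFun G μ)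
    (hGlaw : ∀ i, Measure.map (G i) μ = gammaMeasure (α i) 1)
    (v : Fin S → ℝ) (hv : ∀ i, v i ∈ Icc (0:ℝ) 1) {t : ℝ} (ht : 0 < t) :
    μ {ω | (∀ i, 0 < G i ω) ∧
        t ≤ ∑ i, (G i ω / ∑ j, G j ω - α i / ∑ j, α j) * v i}
      ≤ ENNReal.ofReal (Real.exp (-((∑ i, α i) * t^2/2))) := by
  set n : ℝ := ∑ i, α i with hn_def
  set c : ℝ := (∑ i, α i * v i) / n with hc_def
  have hne : (Finset.univ : Finset (Fin S)).Nonempty := by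
    rcases Finset.eq_empty_or_nonempty (Finset.univ : Finset (Fin S)) with h | h
    · exfalso; rw [hn_def, h, Finset.sum_empty] at hn; exact lt_irrefl 0 hn
    · exact h
  -- a useful rewriting of the event sum, valid when all G i ω > 0
  have hrw : ∀ ω, (∀ i, 0 < G i ω) →
      ∑ i, (G i ω / ∑ j, G j ω - α i / n) * v i
        = (∑ i, v i * G i ω) / (∑ j, G j ω) - c := by
    intro ω hpos
    have hT : 0 < ∑ j, G j ω :=
      Finset.sum_pos (fun j _ => hpos j) hne
    rw [hc_def, Finset.sum_div, Finset.sum_div]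
    rw [← Finset.sum_sub_distrib]
    apply Finset.sum_congr rfl
    intro i _
    field_simp
  by_cases hcase : t ≤ 1 - c
  · obtain ⟨s, hs0, hsw, hprod⟩ := chernoff_exponent_bound α v hα hv hn ht hcase
    rw [← hc_def] at hsw hprod
    set w : Fin S → ℝ := fun i => v i - c - t with hw_def
    have hsub : {ω | (∀ i, 0 < G i ω) ∧
        t ≤ ∑ i, (G i ω / ∑ j, G j ω - α i / n) * v i}
        ⊆ {ω | 0 ≤ ∑ i, w i * G i ω} := by
      intro ω ⟨hpos, hineq⟩
      have hT : 0 < ∑ j, G j ω := Finset.sum_pos (fun j _ => hpos j) hne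
      rw [hrw ω hpos] at hineq
      have h2 : (c + t) * (∑ j, G j ω) ≤ ∑ i, v i * G i ω := by
        rw [← le_div_iff₀ hT]
        linarith
      simp only [Set.mem_setOf_eq, hw_def]
      have h3 : ∑ i, (v i - c - t) * G i ω
          = (∑ i, v i * G i ω) - (c + t) * (∑ j, G j ω) := by
        rw [Finset.mul_sum, ← Finset.sum_sub_distrib]
        apply Finset.sum_congr rfl
        intro i _
        ring
      rw [h3]
      linarith
    calc μ _ ≤ μ {ω | 0 ≤ ∑ i, w i * G i ω} := measure_mono hsub
      _ ≤ ENNReal.ofReal (∏ i, (1 - s * w i) ^ (-(α i))) :=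
          gamma_linear_chernoff μ α hα G hGmeas hGindep hGlaw w s hs0 hsw
      _ ≤ ENNReal.ofReal (Real.exp (-(n * t^2/2))) := ENNReal.ofReal_le_ofReal hprod
  · have hempty : {ω | (∀ i, 0 < G i ω) ∧
        t ≤ ∑ i, (G i ω / ∑ j, G j ω - α i / n) * v i} = ∅ := by
      rw [Set.eq_empty_iff_forall_notMem]
      rintro ω ⟨hpos, hineq⟩
      have hT : 0 < ∑ j, G j ω := Finset.sum_pos (fun j _ => hpos j) hne
      rw [hrw ω hpos] at hineq
      have hle : ∑ i, v i * G i ω ≤ ∑ j, G j ω := by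
        apply Finset.sum_le_sum
        intro i _
        nth_rewrite 2 [show G i ω = 1 * G i ω by ring]
        exact mul_le_mul_of_nonneg_right (hv i).2 (hpos i).le
      have : (∑ i, v i * G i ω) / (∑ j, G j ω) ≤ 1 := by
        rw [div_le_one hT]; exact hle
      have : t ≤ 1 - c := by linarith
      exact hcase this
    rw [hempty]
    simp

/- ### The Gamma measure gives no mass to `Iic 0` -/

lemma gammaMeasure_Iic_zero {a : ℝ} : gammaMeasure a 1 (Iic 0) = 0 := by
  have h1 : gammaMeasure a 1 (Iio 0) = 0 := by
    rw [gammaMeasure, withDensity_apply _ measurableSet_Iio]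
    simpa using lintegral_gammaPDF_of_nonpos (a := a) (r := 1) (le_refl (0:ℝ))
  have h2 : gammaMeasure a 1 {(0:ℝ)} = 0 :=
    (withDensity_absolutelyContinuous volume _) volume_singleton
  have hsub : Iic (0:ℝ) ⊆ Iio 0 ∪ {0} := by
    intro x hx
    rcases lt_or_eq_of_le (mem_Iic.1 hx) with h | h
    · exact Or.inl h
    · exact Or.inr (by simp [h])
  refine le_antisymm ?_ zero_le
  calc gammaMeasure a 1 (Iic 0) ≤ gammaMeasure a 1 (Iio 0 ∪ {0}) := measure_mono hsub
    _ ≤ gammaMeasure a 1 (Iio 0) + gammaMeasure a 1 {0} := measure_union_le _ _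
    _ = 0 := by rw [h1, h2, add_zero]

/- ### Main theorem -/

/-- **Dimension-free Dirichlet concentration** (the fixed-test-vector core of the
paper's Lemma 3).  For `v ∈ [0,H]^S` and `α ∈ (0,∞)^S` with `n := ∑ α i ≥ 2`, let
`P ~ Dirichlet(α)` (realized as normalized independent Gammas) with mean `p̂ = α/n`.
Then for every `δ ∈ (0,1]`,
`P(|∑ i (P i − p̂ i) v i| ≥ H √(2 log(2/δ)/n)) ≤ δ`. -/
theorem dirichlet_transition_concentration
    {Ω : Type*} [MeasurableSpace Ω] (μ : Measure Ω) [IsProbabilityMeasure μ]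
    (S : ℕ) (hS : 2 ≤ S) (H : ℝ) (hH : 0 < H)
    (v : Fin S → ℝ) (hv : ∀ i, v i ∈ Set.Icc (0 : ℝ) H)
    (α : Fin S → ℝ) (hα : ∀ i, 0 < α i) (hαsum : 2 ≤ ∑ i, α i)
    (G : Fin S → Ω → ℝ) (hGmeas : ∀ i, Measurable (G i))
    (hGindep : iIndepFun G μ)
    (hGlaw : ∀ i, Measure.map (G i) μ = gammaMeasure (α i) 1)
    (P : Fin S → Ω → ℝ) (hP : ∀ i ω, P i ω = G i ω / ∑ j, G j ω)
    (δ : ℝ) (hδ0 : 0 < δ) (hδ1 : δ ≤ 1) :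
    μ {ω | H * Real.sqrt (2 * Real.log (2 / δ) / ∑ i, α i) ≤
        |∑ i, (P i ω - α i / ∑ j, α j) * v i|} ≤ ENNReal.ofReal δ := by
  have hn : (0:ℝ) < ∑ i, α i := lt_of_lt_of_le two_pos hαsum
  have hne : (Finset.univ : Finset (Fin S)).Nonempty := by
    rcases Finset.eq_empty_or_nonempty (Finset.univ : Finset (Fin S)) with h | h
    · exfalso; rw [h, Finset.sum_empty] at hn; exact lt_irrefl 0 hn
    · exact h
  have h2δ : (2:ℝ) ≤ 2/δ := by
    rw [le_div_iff₀ hδ0]; nlinarith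
  have hL : 0 < Real.log (2/δ) := Real.log_pos (by linarith)
  set t : ℝ := Real.sqrt (2 * Real.log (2 / δ) / ∑ i, α i) with ht_def
  have ht : 0 < t := Real.sqrt_pos.2 (by positivity)
  have htsq : (∑ i, α i) * t^2/2 = Real.log (2/δ) := by
    rw [ht_def, Real.sq_sqrt (by positivity)]
    field_simp
  have hexp : Real.exp (-((∑ i, α i) * t^2/2)) = δ/2 := by
    rw [htsq, Real.exp_neg, Real.exp_log (by positivity)]
    rw [inv_div]
  set v' : Fin S → ℝ := fun i => v i / H with hv'_def
  have hv'1 : ∀ i, v' i ∈ Icc (0:ℝ) 1 := fun i =>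
    ⟨div_nonneg (hv i).1 hH.le, (div_le_one hH).2 (hv i).2⟩
  have hv'2 : ∀ i, (fun i => 1 - v' i) i ∈ Icc (0:ℝ) 1 := fun i =>
    ⟨by simp only; linarith [(hv'1 i).2], by simp only; linarith [(hv'1 i).1]⟩
  -- the complement of positivity is null
  have hAnull : μ {ω | ¬ ∀ i, 0 < G i ω} = 0 := by
    have hsub : {ω | ¬ ∀ i, 0 < G i ω} ⊆ ⋃ i, {ω | G i ω ≤ 0} := by
      intro ω hω
      push_neg at hω
      obtain ⟨i, hi⟩ := hω
      exact Set.mem_iUnion.2 ⟨i, hi⟩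
    apply measure_mono_null hsub
    apply measure_iUnion_null
    intro i
    have hpre : {ω | G i ω ≤ 0} = G i ⁻¹' (Iic 0) := rfl
    rw [hpre, ← Measure.map_apply (hGmeas i) measurableSet_Iic, hGlaw i]
    exact gammaMeasure_Iic_zero
  -- event inclusion
  have hsplit : {ω | H * t ≤ |∑ i, (P i ω - α i / ∑ j, α j) * v i|}
      ⊆ {ω | ¬ ∀ i, 0 < G i ω}
        ∪ ({ω | (∀ i, 0 < G i ω) ∧
            t ≤ ∑ i, (G i ω / ∑ j, G j ω - α i / ∑ j, α j) * v' i}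
          ∪ {ω | (∀ i, 0 < G i ω) ∧
            t ≤ ∑ i, (G i ω / ∑ j, G j ω - α i / ∑ j, α j) * (fun i => 1 - v' i) i}) := by
    intro ω hω
    by_cases hpos : ∀ i, 0 < G i ω
    · right
      simp only [Set.mem_setOf_eq] at hω
      have hT : 0 < ∑ j, G j ω := Finset.sum_pos (fun j _ => hpos j) hne
      set X' : ℝ := ∑ i, (G i ω / ∑ j, G j ω - α i / ∑ j, α j) * v' i with hX'_def
      have hXeq : ∑ i, (P i ω - α i / ∑ j, α j) * v i = H * X' := by
        rw [hX'_def, Finset.mul_sum]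
        apply Finset.sum_congr rfl
        intro i _
        rw [hP i ω, hv'_def]
        field_simp
      rw [hXeq, abs_mul, abs_of_pos hH] at hω
      have habs : t ≤ |X'| := le_of_mul_le_mul_left hω hH
      rcases le_abs.1 habs with h | h
      · exact Or.inl ⟨hpos, h⟩
      · right
        refine ⟨hpos, ?_⟩
        have hzero : ∑ i, (G i ω / ∑ j, G j ω - α i / ∑ j, α j) = 0 := by
          rw [Finset.sum_sub_distrib, ← Finset.sum_div, ← Finset.sum_div,
            div_self hT.ne', div_self hn.ne', sub_self]
        have hsplit2 : ∑ i, (G i ω / ∑ j, G j ω - α i / ∑ j, α j) * (fun i => 1 - v' i) i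
            = -X' := by
          simp only
          have : ∀ i, (G i ω / ∑ j, G j ω - α i / ∑ j, α j) * (1 - v' i)
              = (G i ω / ∑ j, G j ω - α i / ∑ j, α j)
                - (G i ω / ∑ j, G j ω - α i / ∑ j, α j) * v' i := by
            intro i; ring
          simp_rw [this]
          rw [Finset.sum_sub_distrib, hzero, hX'_def, zero_sub]
        rw [hsplit2]
        exact h
    · left
      exact hpos
  calc μ {ω | H * t ≤ |∑ i, (P i ω - α i / ∑ j, α j) * v i|}
      ≤ μ ({ω | ¬ ∀ i, 0 < G i ω}
        ∪ ({ω | (∀ i, 0 < G i ω) ∧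
            t ≤ ∑ i, (G i ω / ∑ j, G j ω - α i / ∑ j, α j) * v' i}
          ∪ {ω | (∀ i, 0 < G i ω) ∧
            t ≤ ∑ i, (G i ω / ∑ j, G j ω - α i / ∑ j, α j) * (fun i => 1 - v' i) i})) :=
        measure_mono hsplit
    _ ≤ μ {ω | ¬ ∀ i, 0 < G i ω}
        + μ ({ω | (∀ i, 0 < G i ω) ∧
            t ≤ ∑ i, (G i ω / ∑ j, G j ω - α i / ∑ j, α j) * v' i}
          ∪ {ω | (∀ i, 0 < G i ω) ∧
            t ≤ ∑ i, (G i ω / ∑ j, G j ω - α i / ∑ j, α j) * (fun i => 1 - v' i) i}) :=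
        measure_union_le _ _
    _ ≤ 0 + (μ {ω | (∀ i, 0 < G i ω) ∧
            t ≤ ∑ i, (G i ω / ∑ j, G j ω - α i / ∑ j, α j) * v' i}
          + μ {ω | (∀ i, 0 < G i ω) ∧
            t ≤ ∑ i, (G i ω / ∑ j, G j ω - α i / ∑ j, α j) * (fun i => 1 - v' i) i}) := by
        rw [hAnull]
        exact add_le_add le_rfl (measure_union_le _ _)
    _ ≤ 0 + (ENNReal.ofReal (Real.exp (-((∑ i, α i) * t^2/2)))
          + ENNReal.ofReal (Real.exp (-((∑ i, α i) * t^2/2)))) := by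
        apply add_le_add le_rfl
        exact add_le_add
          (dirichlet_one_sided μ α hα hn G hGmeas hGindep hGlaw v' hv'1 ht)
          (dirichlet_one_sided μ α hα hn G hGmeas hGindep hGlaw (fun i => 1 - v' i) hv'2 ht)
    _ = ENNReal.ofReal δ := by
        rw [zero_add, hexp, ← ENNReal.ofReal_add (by positivity) (by positivity)]
        norm_num
end
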